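/- For every player i and every coalition C containing i, the distance δ(⊵_i,C) between player i's preference order and C equals 0 if and only if N⁺_i ⊆ C and N⁻_i ∩ C = ∅. -/

import Mathlib

/-! Basic machinery: weak orders, linear extensions, Kendall-tau,
and the directed Hausdorff–Kendall-tau distance. -/

section Orders

variable {P : Type*}

/-- The strict part `x ▷ y` of a relation `R`. -/
def strictOf (R : P → P → Prop) (x y : P) : Prop := R x y ∧ ¬ R y x

/-- The indifference part `x ∼ y` of a relation `R`. -/
def indiffOf (R : P → P → Prop) (x y : P) : Prop := R x y ∧ R y x

/-- `R` is a weak order (total preorder) on the finite set `S`. -/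
structure IsWeakOrderOn (S : Finset P) (R : P → P → Prop) : Prop where
  refl : ∀ x ∈ S, R x x
  trans : ∀ x ∈ S, ∀ y ∈ S, ∀ z ∈ S, R x y → R y z → R x z
  total : ∀ x ∈ S, ∀ y ∈ S, R x y ∨ R y x

/-- `A` is a linear extension on `S` of the weak order `R`: a strict total
order on `S` which is consistent with the strict part of `R`. -/
structure IsLinExtOn (S : Finset P) (R : P → P → Prop) (A : P → P → Prop) : Prop where
  irrefl : ∀ x ∈ S, ¬ A x x
  trans : ∀ x ∈ S, ∀ y ∈ S, ∀ z ∈ S, A x y → A y z → A x z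
  total : ∀ x ∈ S, ∀ y ∈ S, x ≠ y → A x y ∨ A y x
  extend : ∀ x ∈ S, ∀ y ∈ S, strictOf R x y → A x y

/-- The Kendall-tau distance between two strict (linear) orders on `S`:
the number of pairs ordered oppositely by the two orders. -/
noncomputable def kendallTau (S : Finset P) (A B : P → P → Prop) : ℕ :=
  Set.ncard {p : P × P | p.1 ∈ S ∧ p.2 ∈ S ∧ A p.1 p.2 ∧ B p.2 p.1}

/-- The directed Hausdorff–Kendall-tau distance `→τ(R1,R2)` between weak orders on `S`:
the maximum over linear extensions `B` of `R2` of the minimum over linear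
extensions `A` of `R1` of `τ(A,B)`. -/
noncomputable def dirTau (S : Finset P) (R1 R2 : P → P → Prop) : ℕ :=
  sSup { n : ℕ | ∃ B : P → P → Prop, IsLinExtOn S R2 B ∧
    n = sInf { m : ℕ | ∃ A : P → P → Prop, IsLinExtOn S R1 A ∧ m = kendallTau S A B } }

/-- The (undirected) Hausdorff–Kendall-tau distance `τ*`. -/
noncomputable def hkTau (S : Finset P) (R1 R2 : P → P → Prop) : ℕ :=
  max (dirTau S R1 R2) (dirTau S R2 R1)

end Orders

/-! FEN-hedonic games with distance-based preferences. -/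

section Game

/-- A FEN preference for player `i`: disjoint sets of friends and enemies
(not containing `i`) together with weak orders on the friends and on the enemies. -/
structure FENPref (P : Type*) (i : P) where
  friends : Finset P
  enemies : Finset P
  Rp : P → P → Prop
  Rm : P → P → Prop
  disj : Disjoint friends enemies
  self_not_friend : i ∉ friends
  self_not_enemy : i ∉ enemies
  wo_p : IsWeakOrderOn friends Rp
  wo_m : IsWeakOrderOn enemies Rm

variable {P : Type*} {i : P}

/-- The weak order `⊵⁺_i` on `N⁺_i ∪ {i}`: the friends, ordered by `⊵_i`,
all strictly above `i`. -/
def FENPref.prefPlus (pr : FENPref P i) (x y : P) : Prop :=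
  (x ∈ pr.friends ∧ y ∈ pr.friends ∧ pr.Rp x y) ∨
  (x ∈ pr.friends ∧ y = i) ∨
  (x = i ∧ y = i)

/-- The weak order `⊵⁻_i` on `N⁻_i ∪ {i}`: `i` strictly above all enemies,
which are ordered by `⊵_i`. -/
def FENPref.prefMinus (pr : FENPref P i) (x y : P) : Prop :=
  (x = i ∧ y = i) ∨
  (x = i ∧ y ∈ pr.enemies) ∨
  (x ∈ pr.enemies ∧ y ∈ pr.enemies ∧ pr.Rm x y)

/-- The weak order `C⁺_i` on `N⁺_i ∪ {i}`: friends in `C` strictly above `i`,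
ordered by `⊵_i`; friends not in `C` strictly below `i`, ordered by the reverse of `⊵_i`. -/
def FENPref.coalPlus (pr : FENPref P i) (C : Finset P) (x y : P) : Prop :=
  (x ∈ pr.friends ∧ x ∈ C ∧ y ∈ pr.friends ∧ y ∈ C ∧ pr.Rp x y) ∨
  ((x ∈ pr.friends ∧ x ∈ C) ∧ (y = i ∨ (y ∈ pr.friends ∧ y ∉ C))) ∨
  (x = i ∧ (y = i ∨ (y ∈ pr.friends ∧ y ∉ C))) ∨
  (x ∈ pr.friends ∧ x ∉ C ∧ y ∈ pr.friends ∧ y ∉ C ∧ pr.Rp y x)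

/-- The weak order `C⁻_i` on `N⁻_i ∪ {i}`: enemies in `C` strictly above `i`,
ordered by the reverse of `⊵_i`; enemies not in `C` strictly below `i`, ordered by `⊵_i`. -/
def FENPref.coalMinus (pr : FENPref P i) (C : Finset P) (x y : P) : Prop :=
  (x ∈ pr.enemies ∧ x ∈ C ∧ y ∈ pr.enemies ∧ y ∈ C ∧ pr.Rm y x) ∨
  ((x ∈ pr.enemies ∧ x ∈ C) ∧ (y = i ∨ (y ∈ pr.enemies ∧ y ∉ C))) ∨
  (x = i ∧ (y = i ∨ (y ∈ pr.enemies ∧ y ∉ C))) ∨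
  (x ∈ pr.enemies ∧ x ∉ C ∧ y ∈ pr.enemies ∧ y ∉ C ∧ pr.Rm x y)

variable [DecidableEq P]

/-- `δ⁺(⊵_i, C) = →τ(⊵⁺_i, C⁺_i)`. -/
noncomputable def FENPref.deltaPlus (pr : FENPref P i) (C : Finset P) : ℕ :=
  dirTau (insert i pr.friends) pr.prefPlus (pr.coalPlus C)

/-- `δ⁻(⊵_i, C) = →τ(⊵⁻_i, C⁻_i)`. -/
noncomputable def FENPref.deltaMinus (pr : FENPref P i) (C : Finset P) : ℕ :=
  dirTau (insert i pr.enemies) pr.prefMinus (pr.coalMinus C)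

/-- `δ(⊵_i, C) = δ⁺(⊵_i, C) + δ⁻(⊵_i, C)`. -/
noncomputable def FENPref.delta (pr : FENPref P i) (C : Finset P) : ℕ :=
  pr.deltaPlus C + pr.deltaMinus C

end Game

/-! ### Auxiliary machinery for the proof -/

section AuxOrders

variable {P : Type*}

lemma exists_linext [DecidableEq P] (S : Finset P) (R : P → P → Prop)
    (h : IsWeakOrderOn S R) : ∃ A, IsLinExtOn S R A := by
  classical
  refine ⟨fun x y => strictOf R x y ∨ (R x y ∧ R y x ∧ S.toList.idxOf x < S.toList.idxOf y), ?_, ?_, ?_, ?_⟩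
  · rintro x hx (⟨h1, h2⟩ | ⟨_, _, h3⟩)
    · exact h2 h1
    · omega
  · rintro x hx y hy z hz (⟨h1, h2⟩ | ⟨h1, h1', hlt⟩) (⟨g1, g2⟩ | ⟨g1, g1', glt⟩)
    · exact Or.inl ⟨h.trans x hx y hy z hz h1 g1, fun hzx => h2 (h.trans y hy z hz x hx g1 hzx)⟩
    · exact Or.inl ⟨h.trans x hx y hy z hz h1 g1, fun hzx => h2 (h.trans y hy z hz x hx g1 hzx)⟩
    · exact Or.inl ⟨h.trans x hx y hy z hz h1 g1, fun hzx => g2 (h.trans z hz x hx y hy hzx h1)⟩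
    · exact Or.inr ⟨h.trans x hx y hy z hz h1 g1, h.trans z hz y hy x hx g1' h1', hlt.trans glt⟩
  · intro x hx y hy hxy
    rcases h.total x hx y hy with hR | hR
    · by_cases hR' : R y x
      · have : S.toList.idxOf x ≠ S.toList.idxOf y := by
          intro he
          exact hxy (List.idxOf_inj (Finset.mem_toList.2 hx) |>.1 he)
        rcases this.lt_or_gt with hl | hl
        · exact Or.inl (Or.inr ⟨hR, hR', hl⟩)
        · exact Or.inr (Or.inr ⟨hR', hR, hl⟩)
      · exact Or.inl (Or.inl ⟨hR, hR'⟩)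
    · by_cases hR' : R x y
      · have : S.toList.idxOf x ≠ S.toList.idxOf y := by
          intro he
          exact hxy (List.idxOf_inj (Finset.mem_toList.2 hx) |>.1 he)
        rcases this.lt_or_gt with hl | hl
        · exact Or.inl (Or.inr ⟨hR', hR, hl⟩)
        · exact Or.inr (Or.inr ⟨hR, hR', hl⟩)
      · exact Or.inr (Or.inl ⟨hR, hR'⟩)
  · intro x hx y hy hs
    exact Or.inl hs

/-- The generic "coalition" weak order: members of `F ∩ C` on top (ordered by `R`),
then `i`, then `F \ C` (ordered by the reverse of `R`). -/
def coalRel (i : P) (F C : Finset P) (R : P → P → Prop) (x y : P) : Prop :=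
  (x ∈ F ∧ x ∈ C ∧ y ∈ F ∧ y ∈ C ∧ R x y) ∨
  ((x ∈ F ∧ x ∈ C) ∧ (y = i ∨ (y ∈ F ∧ y ∉ C))) ∨
  (x = i ∧ (y = i ∨ (y ∈ F ∧ y ∉ C))) ∨
  (x ∈ F ∧ x ∉ C ∧ y ∈ F ∧ y ∉ C ∧ R y x)

lemma coalRel_weak [DecidableEq P] {i : P} {F : Finset P} {R : P → P → Prop}
    (hi : i ∉ F) (hwo : IsWeakOrderOn F R) (C : Finset P) :
    IsWeakOrderOn (insert i F) (coalRel i F C R) := by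
  constructor
  · intro x hx
    rcases Finset.mem_insert.1 hx with rfl | hxF
    · exact Or.inr (Or.inr (Or.inl ⟨rfl, Or.inl rfl⟩))
    · by_cases hxC : x ∈ C
      · exact Or.inl ⟨hxF, hxC, hxF, hxC, hwo.refl x hxF⟩
      · exact Or.inr (Or.inr (Or.inr ⟨hxF, hxC, hxF, hxC, hwo.refl x hxF⟩))
  · rintro x hx y hy z hz
      (⟨hx1, hx2, hy1, hy2, hR⟩ | ⟨⟨hx1, hx2⟩, hy'⟩ | ⟨rfl, hy'⟩ | ⟨hx1, hx2, hy1, hy2, hR⟩) h2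
    · rcases h2 with (⟨_, _, hz1, hz2, hR'⟩ | ⟨_, hz'⟩ | ⟨rfl, _⟩ | ⟨_, hyC, _⟩)
      · exact Or.inl ⟨hx1, hx2, hz1, hz2, hwo.trans x hx1 y hy1 z hz1 hR hR'⟩
      · exact Or.inr (Or.inl ⟨⟨hx1, hx2⟩, hz'⟩)
      · exact absurd hy1 hi
      · exact absurd hy2 hyC
    · rcases hy' with rfl | ⟨hy1, hy2⟩
      · rcases h2 with (⟨hy1, _⟩ | ⟨⟨hy1, _⟩, _⟩ | ⟨_, hz'⟩ | ⟨hy1, _⟩)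
        · exact absurd hy1 hi
        · exact absurd hy1 hi
        · exact Or.inr (Or.inl ⟨⟨hx1, hx2⟩, hz'⟩)
        · exact absurd hy1 hi
      · rcases h2 with (⟨_, hyC, _⟩ | ⟨⟨_, hyC⟩, _⟩ | ⟨rfl, _⟩ | ⟨_, _, hz1, hz2, _⟩)
        · exact absurd hyC hy2
        · exact absurd hyC hy2
        · exact absurd hy1 hi
        · exact Or.inr (Or.inl ⟨⟨hx1, hx2⟩, Or.inr ⟨hz1, hz2⟩⟩)
    · rcases hy' with rfl | ⟨hy1, hy2⟩
      · rcases h2 with (⟨hy1, _⟩ | ⟨⟨hy1, _⟩, _⟩ | ⟨_, hz'⟩ | ⟨hy1, _⟩)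
        · exact absurd hy1 hi
        · exact absurd hy1 hi
        · exact Or.inr (Or.inr (Or.inl ⟨rfl, hz'⟩))
        · exact absurd hy1 hi
      · rcases h2 with (⟨_, hyC, _⟩ | ⟨⟨_, hyC⟩, _⟩ | ⟨rfl, _⟩ | ⟨_, _, hz1, hz2, _⟩)
        · exact absurd hyC hy2
        · exact absurd hyC hy2
        · exact absurd hy1 hi
        · exact Or.inr (Or.inr (Or.inl ⟨rfl, Or.inr ⟨hz1, hz2⟩⟩))
    · rcases h2 with (⟨_, hyC, _⟩ | ⟨⟨_, hyC⟩, _⟩ | ⟨rfl, _⟩ | ⟨_, _, hz1, hz2, hR'⟩)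
      · exact absurd hyC hy2
      · exact absurd hyC hy2
      · exact absurd hy1 hi
      · exact Or.inr (Or.inr (Or.inr ⟨hx1, hx2, hz1, hz2, hwo.trans z hz1 y hy1 x hx1 hR' hR⟩))
  · intro x hx y hy
    rcases Finset.mem_insert.1 hx with rfl | hxF
    · rcases Finset.mem_insert.1 hy with rfl | hyF
      · exact Or.inl (Or.inr (Or.inr (Or.inl ⟨rfl, Or.inl rfl⟩)))
      · by_cases hyC : y ∈ C
        · exact Or.inr (Or.inr (Or.inl ⟨⟨hyF, hyC⟩, Or.inl rfl⟩))
        · exact Or.inl (Or.inr (Or.inr (Or.inl ⟨rfl, Or.inr ⟨hyF, hyC⟩⟩)))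
    · rcases Finset.mem_insert.1 hy with rfl | hyF
      · by_cases hxC : x ∈ C
        · exact Or.inl (Or.inr (Or.inl ⟨⟨hxF, hxC⟩, Or.inl rfl⟩))
        · exact Or.inr (Or.inr (Or.inr (Or.inl ⟨rfl, Or.inr ⟨hxF, hxC⟩⟩)))
      · by_cases hxC : x ∈ C <;> by_cases hyC : y ∈ C
        · rcases hwo.total x hxF y hyF with hR | hR
          · exact Or.inl (Or.inl ⟨hxF, hxC, hyF, hyC, hR⟩)
          · exact Or.inr (Or.inl ⟨hyF, hyC, hxF, hxC, hR⟩)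
        · exact Or.inl (Or.inr (Or.inl ⟨⟨hxF, hxC⟩, Or.inr ⟨hyF, hyC⟩⟩))
        · exact Or.inr (Or.inr (Or.inl ⟨⟨hyF, hyC⟩, Or.inr ⟨hxF, hxC⟩⟩))
        · rcases hwo.total x hxF y hyF with hR | hR
          · exact Or.inr (Or.inr (Or.inr (Or.inr ⟨hyF, hyC, hxF, hxC, hR⟩)))
          · exact Or.inl (Or.inr (Or.inr (Or.inr ⟨hxF, hxC, hyF, hyC, hR⟩)))

lemma linext_congr {S : Finset P} {R R' A : P → P → Prop}
    (h : ∀ x y, R x y ↔ R' x y) (hA : IsLinExtOn S R A) : IsLinExtOn S R' A :=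
  ⟨hA.irrefl, hA.trans, hA.total, fun x hx y hy hs =>
    hA.extend x hx y hy ⟨(h x y).2 hs.1, fun hr => hs.2 ((h y x).1 hr)⟩⟩

lemma weak_congr {S : Finset P} {R R' : P → P → Prop}
    (h : ∀ x y, R x y ↔ R' x y) (hR : IsWeakOrderOn S R) : IsWeakOrderOn S R' := by
  constructor
  · intro x hx; exact (h x x).1 (hR.refl x hx)
  · intro x hx y hy z hz h1 h2
    exact (h x z).1 (hR.trans x hx y hy z hz ((h x y).2 h1) ((h y z).2 h2))
  · intro x hx y hy
    rcases hR.total x hx y hy with h1 | h1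
    · exact Or.inl ((h x y).1 h1)
    · exact Or.inr ((h y x).1 h1)

lemma kendallTau_self {S : Finset P} {R B : P → P → Prop} (hB : IsLinExtOn S R B) :
    kendallTau S B B = 0 := by
  have : {p : P × P | p.1 ∈ S ∧ p.2 ∈ S ∧ B p.1 p.2 ∧ B p.2 p.1} = ∅ := by
    ext ⟨a, b⟩
    simp only [Set.mem_setOf_eq, Set.mem_empty_iff_false, iff_false, not_and]
    intro ha hb h1 h2
    exact hB.irrefl a ha (hB.trans a ha b hb a ha h1 h2)
  rw [kendallTau, this, Set.ncard_empty]

lemma kendallTau_le (S : Finset P) (A B : P → P → Prop) :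
    kendallTau S A B ≤ (S ×ˢ S).card := by
  rw [← Set.ncard_coe_finset]
  apply Set.ncard_le_ncard
  · rintro ⟨a, b⟩ ⟨ha, hb, -, -⟩
    simp [Finset.mem_product, ha, hb]
  · exact (S ×ˢ S).finite_toSet

lemma dirTau_eq_zero_of_iff {S : Finset P} {R1 R2 : P → P → Prop}
    (h : ∀ x y, R2 x y ↔ R1 x y) : dirTau S R1 R2 = 0 := by
  apply Nat.le_zero.1
  apply csSup_le'
  rintro n ⟨B, hB, rfl⟩
  have hB1 : IsLinExtOn S R1 B := linext_congr h hB
  have h0 : (0 : ℕ) ∈ { m : ℕ | ∃ A, IsLinExtOn S R1 A ∧ m = kendallTau S A B } :=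
    ⟨B, hB1, (kendallTau_self hB1).symm⟩
  exact Nat.sInf_le h0

lemma one_le_dirTau [DecidableEq P] {S : Finset P} {R1 R2 : P → P → Prop}
    (h1 : IsWeakOrderOn S R1) (h2 : IsWeakOrderOn S R2) {a b : P}
    (ha : a ∈ S) (hb : b ∈ S) (hab : strictOf R1 a b) (hba : strictOf R2 b a) :
    1 ≤ dirTau S R1 R2 := by
  obtain ⟨B, hB⟩ := exists_linext S R2 h2
  obtain ⟨A0, hA0⟩ := exists_linext S R1 h1
  have hbdd : BddAbove { n : ℕ | ∃ B : P → P → Prop, IsLinExtOn S R2 B ∧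
      n = sInf { m : ℕ | ∃ A : P → P → Prop, IsLinExtOn S R1 A ∧ m = kendallTau S A B } } := by
    refine ⟨(S ×ˢ S).card, ?_⟩
    rintro n ⟨B', hB', rfl⟩
    have hne : { m : ℕ | ∃ A, IsLinExtOn S R1 A ∧ m = kendallTau S A B' }.Nonempty :=
      ⟨kendallTau S A0 B', A0, hA0, rfl⟩
    obtain ⟨A', hA', hm⟩ := Nat.sInf_mem hne
    rw [hm]
    exact kendallTau_le S A' B'
  have hmem : sInf { m : ℕ | ∃ A, IsLinExtOn S R1 A ∧ m = kendallTau S A B } ∈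
      { n : ℕ | ∃ B : P → P → Prop, IsLinExtOn S R2 B ∧
      n = sInf { m : ℕ | ∃ A : P → P → Prop, IsLinExtOn S R1 A ∧ m = kendallTau S A B } } :=
    ⟨B, hB, rfl⟩
  have hge : 1 ≤ sInf { m : ℕ | ∃ A, IsLinExtOn S R1 A ∧ m = kendallTau S A B } := by
    have hne : { m : ℕ | ∃ A, IsLinExtOn S R1 A ∧ m = kendallTau S A B }.Nonempty :=
      ⟨kendallTau S A0 B, A0, hA0, rfl⟩
    obtain ⟨A', hA', hm⟩ := Nat.sInf_mem hne
    rw [hm, kendallTau]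
    have hmem2 : (a, b) ∈ {p : P × P | p.1 ∈ S ∧ p.2 ∈ S ∧ A' p.1 p.2 ∧ B p.2 p.1} :=
      ⟨ha, hb, hA'.extend a ha b hb hab, hB.extend b hb a ha hba⟩
    have hfin : {p : P × P | p.1 ∈ S ∧ p.2 ∈ S ∧ A' p.1 p.2 ∧ B p.2 p.1}.Finite := by
      apply Set.Finite.subset ((S ×ˢ S).finite_toSet)
      rintro ⟨u, v⟩ ⟨hu, hv, -, -⟩
      simp [Finset.mem_product, hu, hv]
    exact (Set.ncard_pos hfin).2 ⟨_, hmem2⟩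
  exact le_trans hge (le_csSup hbdd hmem)

end AuxOrders

section AuxGame

variable {P : Type*} {i : P} [DecidableEq P]

lemma coalPlus_eq_coalRel (pr : FENPref P i) (C : Finset P) :
    pr.coalPlus C = coalRel i pr.friends C pr.Rp := rfl

lemma coalMinus_eq_coalRel (pr : FENPref P i) (C : Finset P) :
    pr.coalMinus C = coalRel i pr.enemies C (fun a b => pr.Rm b a) := rfl

lemma coalPlus_weak (pr : FENPref P i) (C : Finset P) :
    IsWeakOrderOn (insert i pr.friends) (pr.coalPlus C) := by
  rw [coalPlus_eq_coalRel]
  exact coalRel_weak pr.self_not_friend pr.wo_p C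

lemma coalMinus_weak (pr : FENPref P i) (C : Finset P) :
    IsWeakOrderOn (insert i pr.enemies) (pr.coalMinus C) := by
  rw [coalMinus_eq_coalRel]
  refine coalRel_weak pr.self_not_enemy ?_ C
  exact ⟨pr.wo_m.refl,
    fun x hx y hy z hz h1 h2 => pr.wo_m.trans z hz y hy x hx h2 h1,
    fun x hx y hy => pr.wo_m.total y hy x hx⟩

lemma coalPlus_iff_prefPlus {pr : FENPref P i} {C : Finset P} (h : pr.friends ⊆ C)
    (x y : P) : pr.coalPlus C x y ↔ pr.prefPlus x y := by
  have hs : ∀ a, a ∈ pr.friends → a ∈ C := fun a ha => h ha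
  unfold FENPref.coalPlus FENPref.prefPlus
  tauto

lemma coalMinus_iff_prefMinus {pr : FENPref P i} {C : Finset P}
    (h : ∀ e ∈ pr.enemies, e ∉ C) (x y : P) :
    pr.coalMinus C x y ↔ pr.prefMinus x y := by
  unfold FENPref.coalMinus FENPref.prefMinus
  tauto

lemma prefPlus_weak (pr : FENPref P i) :
    IsWeakOrderOn (insert i pr.friends) pr.prefPlus :=
  weak_congr (coalPlus_iff_prefPlus (Finset.subset_insert i pr.friends))
    (coalPlus_weak pr (insert i pr.friends))

lemma prefMinus_weak (pr : FENPref P i) :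
    IsWeakOrderOn (insert i pr.enemies) pr.prefMinus :=
  weak_congr (coalMinus_iff_prefMinus (fun e _ he => (Finset.notMem_empty e) he))
    (coalMinus_weak pr ∅)

end AuxGame

/-- The distance `δ(⊵_i, C)` between a player's preference order and a coalition `C`
containing `i` is `0` if and only if `N⁺_i ⊆ C` and `N⁻_i ∩ C = ∅`. -/

theorem delta_eq_zero_iff {P : Type*} [DecidableEq P] {i : P} (pr : FENPref P i)
    (C : Finset P) (hiC : i ∈ C) :
    pr.delta C = 0 ↔ pr.friends ⊆ C ∧ pr.enemies ∩ C = ∅ := by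
  constructor
  · intro h
    have h' : pr.deltaPlus C + pr.deltaMinus C = 0 := h
    have hp : pr.deltaPlus C = 0 := by omega
    have hm : pr.deltaMinus C = 0 := by omega
    constructor
    · intro f hf
      by_contra hfC
      have hab : strictOf pr.prefPlus f i := by
        refine ⟨Or.inr (Or.inl ⟨hf, rfl⟩), ?_⟩
        rintro (⟨h1, -⟩ | ⟨h1, -⟩ | ⟨-, heq⟩)
        · exact pr.self_not_friend h1
        · exact pr.self_not_friend h1
        · exact pr.self_not_friend (heq ▸ hf)
      have hba : strictOf (pr.coalPlus C) i f := by
        refine ⟨Or.inr (Or.inr (Or.inl ⟨rfl, Or.inr ⟨hf, hfC⟩⟩)), ?_⟩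
        rintro (⟨-, -, h1, -⟩ | ⟨⟨-, hc⟩, -⟩ | ⟨heq, -⟩ | ⟨-, -, h1, -⟩)
        · exact pr.self_not_friend h1
        · exact hfC hc
        · exact pr.self_not_friend (heq ▸ hf)
        · exact pr.self_not_friend h1
      have h1 : 1 ≤ pr.deltaPlus C :=
        one_le_dirTau (prefPlus_weak pr) (coalPlus_weak pr C)
          (Finset.mem_insert_of_mem hf) (Finset.mem_insert_self i pr.friends) hab hba
      omega
    · rw [Finset.eq_empty_iff_forall_notMem]
      rintro e hee
      obtain ⟨he1, he2⟩ := Finset.mem_inter.1 hee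
      have hab : strictOf pr.prefMinus i e := by
        refine ⟨Or.inr (Or.inl ⟨rfl, he1⟩), ?_⟩
        rintro (⟨heq, -⟩ | ⟨heq, -⟩ | ⟨-, h1, -⟩)
        · exact pr.self_not_enemy (heq ▸ he1)
        · exact pr.self_not_enemy (heq ▸ he1)
        · exact pr.self_not_enemy h1
      have hba : strictOf (pr.coalMinus C) e i := by
        refine ⟨Or.inr (Or.inl ⟨⟨he1, he2⟩, Or.inl rfl⟩), ?_⟩
        rintro (⟨h1, -⟩ | ⟨⟨h1, -⟩, -⟩ | ⟨-, heq | ⟨-, hc⟩⟩ | ⟨h1, -⟩)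
        · exact pr.self_not_enemy h1
        · exact pr.self_not_enemy h1
        · exact pr.self_not_enemy (heq ▸ he1)
        · exact hc he2
        · exact pr.self_not_enemy h1
      have h1 : 1 ≤ pr.deltaMinus C :=
        one_le_dirTau (prefMinus_weak pr) (coalMinus_weak pr C)
          (Finset.mem_insert_self i pr.enemies) (Finset.mem_insert_of_mem he1) hab hba
      omega
  · rintro ⟨h1, h2⟩
    have hm : ∀ e ∈ pr.enemies, e ∉ C := fun e he hc =>
      (Finset.eq_empty_iff_forall_notMem.1 h2 e) (Finset.mem_inter.2 ⟨he, hc⟩)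
    have hp0 : pr.deltaPlus C = 0 := dirTau_eq_zero_of_iff (coalPlus_iff_prefPlus h1)
    have hm0 : pr.deltaMinus C = 0 := dirTau_eq_zero_of_iff (coalMinus_iff_prefMinus hm)
    show pr.deltaPlus C + pr.deltaMinus C = 0
    omega
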